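/- For positive integers n and r with n ≥ r+1, the alternating sum ∑_{c=r+1}^{n} (-1)^{c+r+1} · C(c-2, r-1) · C(n+1, c+1) equals r(r+1)/2 + (n+1)(n/2 - r). (Equivalently, multiplying by 2: 2·∑_{c=r+1}^{n} (-1)^{c+r+1} C(c-2,r-1) C(n+1,c+1) = r(r+1) + (n+1)(n-2r).) -/

import Mathlib

open Finset

private lemma lemW (r N : ℕ) (hr : 1 ≤ r) (h : r ≤ N) :
    ∑ e ∈ Icc (r - 1) N, (-1 : ℤ) ^ (e + r + 1) * (e.choose (r - 1)) * (N.choose e) = 0 := by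
  have hmap : Icc (r - 1) N = (range ((N - r + 1) + 1)).map (addRightEmbedding (r - 1)) := by
    rw [Nat.range_eq_Icc_zero_sub_one _ (by omega), Finset.map_add_right_Icc]
    congr 1 <;> omega
  rw [hmap, Finset.sum_map]
  simp only [addRightEmbedding_apply]
  have key : ∀ j ∈ range ((N - r + 1) + 1),
      (-1 : ℤ) ^ (j + (r - 1) + r + 1) * ((j + (r - 1)).choose (r - 1)) * (N.choose (j + (r - 1)))
        = (N.choose (r - 1) : ℤ) * ((-1 : ℤ) ^ j * ((N - r + 1).choose j)) := by
    intro j hj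
    rw [mem_range] at hj
    have h1 : j + (r - 1) ≤ N := by omega
    have h2 : r - 1 ≤ j + (r - 1) := Nat.le_add_left _ _
    have hmul := Nat.choose_mul (n := N) h2
    have h3 : N - (r - 1) = N - r + 1 := by omega
    have h4 : j + (r - 1) - (r - 1) = j := by omega
    rw [h3, h4] at hmul
    have h5 : (-1 : ℤ) ^ (j + (r - 1) + r + 1) = (-1) ^ j := by
      have he : j + (r - 1) + r + 1 = 2 * r + j := by omega
      rw [he, pow_add, pow_mul]; norm_num
    rw [h5]
    have := congrArg (fun x : ℕ => (x : ℤ)) hmul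
    push_cast at this
    linear_combination (-1 : ℤ) ^ j * this
  rw [Finset.sum_congr rfl key, ← Finset.mul_sum,
    Int.alternating_sum_range_choose_of_ne (by omega : N - r + 1 ≠ 0), mul_zero]

private lemma lemV (r N : ℕ) (hr : 1 ≤ r) (h : r ≤ N) :
    ∑ d ∈ Icc r N, (-1 : ℤ) ^ (d + r) * ((d - 1).choose (r - 1)) * (N.choose d) = 1 := by
  induction N, h using Nat.le_induction with
  | base =>
    rw [Icc_self, Finset.sum_singleton]
    have : (-1 : ℤ) ^ (r + r) = 1 := by
      rw [← two_mul, pow_mul]; norm_num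
    simp [this]
  | succ N hN ih =>
    have split : ∀ d ∈ Icc r (N + 1),
        (-1 : ℤ) ^ (d + r) * ((d - 1).choose (r - 1)) * ((N + 1).choose d)
          = (-1 : ℤ) ^ (d + r) * ((d - 1).choose (r - 1)) * (N.choose d)
            + (-1 : ℤ) ^ (d + r) * ((d - 1).choose (r - 1)) * (N.choose (d - 1)) := by
      intro d hd
      rw [mem_Icc] at hd
      obtain ⟨k, rfl⟩ : ∃ k, d = k + 1 := ⟨d - 1, by omega⟩
      rw [Nat.choose_succ_succ]
      simp only [Nat.add_sub_cancel]
      push_cast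
      ring
    rw [Finset.sum_congr rfl split, Finset.sum_add_distrib]
    have hA : ∑ d ∈ Icc r (N + 1),
        (-1 : ℤ) ^ (d + r) * ((d - 1).choose (r - 1)) * (N.choose d) = 1 := by
      rw [Finset.sum_Icc_succ_top (by omega : r ≤ N + 1), ih, Nat.choose_succ_self]
      simp
    have hmap : Icc r (N + 1) = (Icc (r - 1) N).map (addRightEmbedding 1) := by
      rw [Finset.map_add_right_Icc]
      congr 1
      omega
    have hB : ∑ d ∈ Icc r (N + 1),
        (-1 : ℤ) ^ (d + r) * ((d - 1).choose (r - 1)) * (N.choose (d - 1)) = 0 := by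
      rw [hmap, Finset.sum_map]
      have : ∀ e ∈ Icc (r - 1) N,
          (-1 : ℤ) ^ ((addRightEmbedding 1) e + r) * (((addRightEmbedding 1) e - 1).choose (r - 1))
              * (N.choose ((addRightEmbedding 1) e - 1))
            = (-1 : ℤ) ^ (e + r + 1) * (e.choose (r - 1)) * (N.choose e) := by
        intro e he
        simp only [addRightEmbedding_apply, Nat.add_sub_cancel]
        ring_nf
      rw [Finset.sum_congr rfl this]
      exact lemW r N hr (by omega)
    rw [hA, hB, add_zero]

private lemma lemU (r N : ℕ) (hr : 1 ≤ r) (h : r + 1 ≤ N) :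
    ∑ c ∈ Icc (r + 1) N, (-1 : ℤ) ^ (c + r + 1) * ((c - 2).choose (r - 1)) * (N.choose c)
      = (N : ℤ) - r := by
  induction N, h using Nat.le_induction with
  | base =>
    rw [Icc_self, Finset.sum_singleton]
    have : (-1 : ℤ) ^ (r + 1 + r + 1) = 1 := by
      have he : r + 1 + r + 1 = 2 * (r + 1) := by omega
      rw [he, pow_mul]; norm_num
    have h2 : r + 1 - 2 = r - 1 := by omega
    rw [this, h2]
    simp
  | succ N hN ih =>
    have split : ∀ c ∈ Icc (r + 1) (N + 1),
        (-1 : ℤ) ^ (c + r + 1) * ((c - 2).choose (r - 1)) * ((N + 1).choose c)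
          = (-1 : ℤ) ^ (c + r + 1) * ((c - 2).choose (r - 1)) * (N.choose c)
            + (-1 : ℤ) ^ (c + r + 1) * ((c - 2).choose (r - 1)) * (N.choose (c - 1)) := by
      intro c hc
      rw [mem_Icc] at hc
      obtain ⟨k, rfl⟩ : ∃ k, c = k + 1 := ⟨c - 1, by omega⟩
      rw [Nat.choose_succ_succ]
      simp only [Nat.add_sub_cancel]
      push_cast
      ring
    rw [Finset.sum_congr rfl split, Finset.sum_add_distrib]
    have hA : ∑ c ∈ Icc (r + 1) (N + 1),
        (-1 : ℤ) ^ (c + r + 1) * ((c - 2).choose (r - 1)) * (N.choose c) = (N : ℤ) - r := by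
      rw [Finset.sum_Icc_succ_top (by omega : r + 1 ≤ N + 1), ih, Nat.choose_succ_self]
      simp
    have hmap : Icc (r + 1) (N + 1) = (Icc r N).map (addRightEmbedding 1) := by
      rw [Finset.map_add_right_Icc]
    have hB : ∑ c ∈ Icc (r + 1) (N + 1),
        (-1 : ℤ) ^ (c + r + 1) * ((c - 2).choose (r - 1)) * (N.choose (c - 1)) = 1 := by
      rw [hmap, Finset.sum_map]
      have : ∀ d ∈ Icc r N,
          (-1 : ℤ) ^ ((addRightEmbedding 1) d + r + 1) * (((addRightEmbedding 1) d - 2).choose (r - 1))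
              * (N.choose ((addRightEmbedding 1) d - 1))
            = (-1 : ℤ) ^ (d + r) * ((d - 1).choose (r - 1)) * (N.choose d) := by
        intro d hd
        rw [mem_Icc] at hd
        simp only [addRightEmbedding_apply, Nat.add_sub_cancel]
        have h2 : d + 1 - 2 = d - 1 := by omega
        have hpow : (-1 : ℤ) ^ (d + 1 + r + 1) = (-1) ^ (d + r) := by
          have he : d + 1 + r + 1 = (d + r) + 2 := by omega
          rw [he, pow_add]; norm_num
        rw [h2, hpow]
      rw [Finset.sum_congr rfl this]
      exact lemV r N hr (by omega)
    rw [hA, hB]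
    push_cast
    ring

theorem stmt_0 (n r : ℕ) (hr : 1 ≤ r) (h : r + 1 ≤ n) :
    2 * ∑ c ∈ Finset.Icc (r + 1) n,
        (-1 : ℤ) ^ (c + r + 1) * ((c - 2).choose (r - 1)) * ((n + 1).choose (c + 1))
      = (r : ℤ) * (r + 1) + ((n : ℤ) + 1) * ((n : ℤ) - 2 * r) := by
  induction n, h using Nat.le_induction with
  | base =>
    rw [Icc_self, Finset.sum_singleton]
    have hpow : (-1 : ℤ) ^ (r + 1 + r + 1) = 1 := by
      have he : r + 1 + r + 1 = 2 * (r + 1) := by omega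
      rw [he, pow_mul]; norm_num
    have h2 : r + 1 - 2 = r - 1 := by omega
    rw [hpow, h2]
    simp only [Nat.choose_self, Nat.cast_one, mul_one, one_mul]
    push_cast
    ring
  | succ n hn ih =>
    have split : ∀ c ∈ Icc (r + 1) (n + 1),
        (-1 : ℤ) ^ (c + r + 1) * ((c - 2).choose (r - 1)) * ((n + 1 + 1).choose (c + 1))
          = (-1 : ℤ) ^ (c + r + 1) * ((c - 2).choose (r - 1)) * ((n + 1).choose (c + 1))
            + (-1 : ℤ) ^ (c + r + 1) * ((c - 2).choose (r - 1)) * ((n + 1).choose c) := by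
      intro c hc
      rw [Nat.choose_succ_succ]
      push_cast
      ring
    rw [Finset.sum_congr rfl split, Finset.sum_add_distrib]
    have hA : 2 * ∑ c ∈ Icc (r + 1) (n + 1),
        (-1 : ℤ) ^ (c + r + 1) * ((c - 2).choose (r - 1)) * ((n + 1).choose (c + 1))
          = (r : ℤ) * (r + 1) + ((n : ℤ) + 1) * ((n : ℤ) - 2 * r) := by
      rw [Finset.sum_Icc_succ_top (by omega : r + 1 ≤ n + 1), Nat.choose_succ_self]
      simp only [Nat.cast_zero, mul_zero, add_zero]
      exact ih
    have hB : ∑ c ∈ Icc (r + 1) (n + 1),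
        (-1 : ℤ) ^ (c + r + 1) * ((c - 2).choose (r - 1)) * ((n + 1).choose c)
          = ((n : ℤ) + 1) - r := by
      have := lemU r (n + 1) hr (by omega)
      rw [this]
      push_cast
      ring
    rw [mul_add, hA, hB]
    push_cast
    ring
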